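/- Let G be a finite group with g ∈ Z(G), and let ρ : G → Aut(M) be an irreducible (over ℚ) representation on a finitely generated free ℤ-module M such that ρ(g) ≠ id. Then |G|·M ⊆ Im(id_M − ρ(g)). -/

import Mathlib

open TensorProduct

open Polynomial in
private lemma commute_aeval' {R A : Type*} [CommSemiring R] [Semiring A] [Algebra R A]
    {a b : A} (h : Commute a b) (p : R[X]) : Commute (aeval a p) b := by
  induction p using Polynomial.induction_on with
  | C r => simpa using (Algebra.commute_algebraMap_left r b)
  | add p q hp hq => simpa [map_add] using hp.add_left hq
  | monomial n r hr =>
    simp only [map_mul, aeval_C, map_pow, aeval_X]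
    exact Commute.mul_left (Algebra.commutes r b) (h.pow_left _)


/-- Lemma 4.8: if `g` is central in the finite group `G` and `ρ : G → Aut(M)` is a
`ℚ`-irreducible representation on a finitely generated free `ℤ`-module on which `g` acts
non-trivially, then `|G|·M ⊆ W_g(M) = Im(id − ρ(g))`. -/
theorem stmt15 (G : Type*) [Group G] [Fintype G]
    (M : Type*) [AddCommGroup M] [Module.Free ℤ M] [Module.Finite ℤ M]
    (ρ : G →* (M ≃ₗ[ℤ] M))
    (hirr : ∀ W : Submodule ℚ (ℚ ⊗[ℤ] M),
      (∀ g : G, W.map (LinearMap.baseChange ℚ (ρ g : M →ₗ[ℤ] M)) ≤ W) → W = ⊥ ∨ W = ⊤)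
    (g : G) (hg : g ∈ Subgroup.center G) (hnt : ρ g ≠ 1) :
    ∀ v : M, ∃ u : M, (Fintype.card G : ℤ) • v = u - ρ g u := by
  classical
  set n := orderOf (ρ g) with hn
  have hpowcard : (ρ g) ^ Fintype.card G = 1 := by
    rw [← map_pow, pow_card_eq_one, map_one]
  have hndvd : n ∣ Fintype.card G := orderOf_dvd_of_pow_eq_one hpowcard
  have hnpos : 0 < n := Nat.pos_of_dvd_of_pos hndvd Fintype.card_pos
  have hn1 : n ≠ 1 := fun h => hnt (orderOf_eq_one_iff.mp h)
  -- the endomorphism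
  set T : Module.End ℤ M := (ρ g : M →ₗ[ℤ] M) with hT
  have hTpow : ∀ k : ℕ, ((ρ g ^ k : M ≃ₗ[ℤ] M) : M →ₗ[ℤ] M) = T ^ k := fun k => by
    ext v
    simp [T, LinearEquiv.pow_apply, Module.End.pow_apply]
  have hTn : T ^ n = 1 := by
    rw [← hTpow, pow_orderOf_eq_one]; rfl
  -- base change
  set B : Module.End ℤ M →ₐ[ℤ] Module.End ℚ (ℚ ⊗[ℤ] M) := Module.End.baseChangeHom ℤ ℚ M with hB
  have hBapply : ∀ (S : Module.End ℤ M) (a : ℚ) (v : M), B S (a ⊗ₜ v) = a ⊗ₜ S v := by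
    intro S a v
    exact LinearMap.baseChange_tmul S a v
  -- the inclusion j : M → ℚ ⊗ M is injective
  have hj : Function.Injective (fun v : M => (1 : ℚ) ⊗ₜ[ℤ] v) := by
    have h1 : Function.Injective (Algebra.linearMap ℤ ℚ) := fun a b h => by
      simpa using h
    have h2 := Module.Flat.rTensor_preserves_injective_linearMap
      (M := M) (Algebra.linearMap ℤ ℚ) h1
    have h3 : Function.Injective ((TensorProduct.lid ℤ M).symm.toLinearMap) :=
      (TensorProduct.lid ℤ M).symm.injective
    have key : ∀ v : M, (LinearMap.rTensor M (Algebra.linearMap ℤ ℚ))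
        ((TensorProduct.lid ℤ M).symm v) = (1 : ℚ) ⊗ₜ[ℤ] v := fun v => by
      simp [TensorProduct.lid_symm_apply]
    intro a b hab
    exact (h2.comp h3) (by simpa [Function.comp, key] using hab)
  set Tq : Module.End ℚ (ℚ ⊗[ℤ] M) := B T with hTq
  have hTqn : Tq ^ n = 1 := by rw [hTq, ← map_pow, hTn, map_one]
  -- injectivity of cyclotomic factors for proper divisors
  have hinj : ∀ d ∈ n.divisors.erase n,
      Function.Injective (Polynomial.aeval Tq (Polynomial.cyclotomic d ℤ)) := by
    intro d hd
    rw [Finset.mem_erase, Nat.mem_divisors] at hd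
    obtain ⟨hdn, hdvd, -⟩ := hd
    set P : Module.End ℚ (ℚ ⊗[ℤ] M) := Polynomial.aeval Tq (Polynomial.cyclotomic d ℤ) with hP
    set W : Submodule ℚ (ℚ ⊗[ℤ] M) := LinearMap.ker P with hW
    have hcomm : ∀ h : G, Commute P (B ((ρ h : M →ₗ[ℤ] M))) := by
      intro h
      apply commute_aeval'
      rw [hTq, hT]
      have hgh : ρ g * ρ h = ρ h * ρ g := by
        rw [← map_mul, ← map_mul, Subgroup.mem_center_iff.mp hg h]
      have hE : ((ρ g : M →ₗ[ℤ] M) * (ρ h : M →ₗ[ℤ] M) : Module.End ℤ M)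
          = (ρ h : M →ₗ[ℤ] M) * (ρ g : M →ₗ[ℤ] M) := by
        ext v
        show (ρ g) ((ρ h) v) = (ρ h) ((ρ g) v)
        have := congrArg (fun e : M ≃ₗ[ℤ] M => e v) hgh
        simpa using this
      have hE' : Commute ((ρ g : M →ₗ[ℤ] M)) ((ρ h : M →ₗ[ℤ] M)) := hE
      exact hE'.map B
    have hWinv : ∀ h : G, W.map (LinearMap.baseChange ℚ (ρ h : M →ₗ[ℤ] M)) ≤ W := by
      intro h w hw
      obtain ⟨x, hx, rfl⟩ := hw
      have hx' : P x = 0 := hx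
      have hbc : LinearMap.baseChange ℚ ((ρ h : M →ₗ[ℤ] M)) = B ((ρ h : M →ₗ[ℤ] M)) := rfl
      show P (LinearMap.baseChange ℚ ((ρ h : M →ₗ[ℤ] M)) x) = 0
      rw [hbc, ← Module.End.mul_apply, hcomm h, Module.End.mul_apply, hx', map_zero]
    rcases hirr W hWinv with hbot | htop
    · rw [hW] at hbot
      exact LinearMap.ker_eq_bot.mp hbot
    · exfalso
      have hP0 : P = 0 := LinearMap.ker_eq_top.mp htop
      have hdpos : 0 < d := Nat.pos_of_dvd_of_pos hdvd hnpos
      have hTqd : Tq ^ d = 1 := by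
        obtain ⟨q, hq⟩ := Polynomial.cyclotomic.dvd_X_pow_sub_one d ℤ
        have := congrArg (Polynomial.aeval Tq) hq
        simp only [map_sub, map_pow, Polynomial.aeval_X, map_one, map_mul, ← hP, hP0,
          zero_mul] at this
        exact sub_eq_zero.mp this
      have hTd : T ^ d = 1 := by
        ext v
        have h2 : B (T ^ d) ((1 : ℚ) ⊗ₜ[ℤ] v) = (1 : ℚ) ⊗ₜ[ℤ] ((T ^ d) v) := hBapply _ _ _
        rw [map_pow, ← hTq, hTqd] at h2
        simp only [Module.End.one_apply] at h2 ⊢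
        exact hj h2.symm
      have hgd : ρ g ^ d = 1 := by
        apply LinearEquiv.toLinearMap_injective
        show ((ρ g ^ d : M ≃ₗ[ℤ] M) : M →ₗ[ℤ] M) = _
        rw [hTpow d, hTd]
        rfl
      have := orderOf_dvd_of_pow_eq_one hgd
      rw [← hn] at this
      exact hdn (Nat.dvd_antisymm hdvd this)
  -- cyclotomic n annihilates Tq
  have hcycTq : Polynomial.aeval Tq (Polynomial.cyclotomic n ℤ) = 0 := by
    set Q : Polynomial ℤ := ∏ d ∈ n.divisors.erase n, Polynomial.cyclotomic d ℤ with hQ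
    have hmem : n ∈ n.divisors := Nat.mem_divisors_self n hnpos.ne'
    have hsplit : Q * Polynomial.cyclotomic n ℤ = Polynomial.X ^ n - 1 := by
      rw [hQ, Finset.prod_erase_mul _ _ hmem, Polynomial.prod_cyclotomic_eq_X_pow_sub_one hnpos]
    have hprod : Polynomial.aeval Tq Q * Polynomial.aeval Tq (Polynomial.cyclotomic n ℤ) = 0 := by
      rw [← map_mul, hsplit]
      simp [hTqn]
    have hQinj : Function.Injective (Polynomial.aeval Tq Q) := by
      rw [hQ]
      refine Finset.prod_induction _
        (fun P : Polynomial ℤ => Function.Injective (Polynomial.aeval Tq P)) ?_ ?_ ?_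
      · intro a b ha hb x y hxy
        simp only [map_mul, Module.End.mul_apply] at hxy
        exact hb (ha hxy)
      · intro x y hxy; simpa using hxy
      · exact hinj
    apply LinearMap.ext
    intro w
    have h5 := congrFun (congrArg DFunLike.coe hprod) w
    simp only [Module.End.mul_apply, LinearMap.zero_apply] at h5 ⊢
    exact hQinj (a₁ := Polynomial.aeval Tq (Polynomial.cyclotomic n ℤ) w) (a₂ := 0)
      (by simpa using h5)
  -- pull back to ℤ
  have hcycT : Polynomial.aeval T (Polynomial.cyclotomic n ℤ) = 0 := by
    ext v
    have h1 : B (Polynomial.aeval T (Polynomial.cyclotomic n ℤ)) = 0 := by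
      rw [← Polynomial.aeval_algHom_apply, ← hTq, hcycTq]
    have h2 := hBapply (Polynomial.aeval T (Polynomial.cyclotomic n ℤ)) 1 v
    rw [h1] at h2
    simp only [LinearMap.zero_apply] at h2
    have := hj (show (1:ℚ) ⊗ₜ[ℤ] (Polynomial.aeval T (Polynomial.cyclotomic n ℤ) v)
        = (1:ℚ) ⊗ₜ[ℤ] (0 : M) by rw [← h2]; simp)
    simpa using this
  -- c = Φ_n(1) divides n
  set c : ℤ := (Polynomial.cyclotomic n ℤ).eval 1 with hc
  have hcdvdn : c ∣ (n : ℤ) := by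
    have h1 := congrArg (Polynomial.eval 1) (Polynomial.prod_cyclotomic_eq_geom_sum hnpos ℤ)
    simp only [Polynomial.eval_prod, Polynomial.eval_geom_sum, one_pow, Finset.sum_const,
      Finset.card_range, nsmul_eq_mul, mul_one] at h1
    rw [← h1]
    apply Finset.dvd_prod_of_mem
    rw [Finset.mem_erase, Nat.mem_divisors]
    exact ⟨hn1, dvd_refl n, hnpos.ne'⟩
  have hcdvdcard : c ∣ (Fintype.card G : ℤ) := hcdvdn.trans (Int.natCast_dvd_natCast.mpr hndvd)
  -- c • v ∈ Im (1 - T)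
  obtain ⟨q, hq⟩ := Polynomial.X_sub_C_dvd_sub_C_eval (a := (1:ℤ)) (p := Polynomial.cyclotomic n ℤ)
  have key : ∀ w : M, c • w = (Polynomial.aeval T q) w - T ((Polynomial.aeval T q) w) := by
    intro w
    have := congrArg (Polynomial.aeval T) hq
    simp only [map_sub, Polynomial.aeval_X, Polynomial.aeval_C, map_mul, hcycT,
      Polynomial.aeval_algebraMap_apply] at this
    have h2 := congrFun (congrArg DFunLike.coe this) w
    simp only [LinearMap.sub_apply, LinearMap.zero_apply, Module.End.mul_apply] at h2
    have halg : ((algebraMap ℤ (Module.End ℤ M)) c) w = c • w := by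
      simp [Module.algebraMap_end_apply]
    rw [halg] at h2
    set u := (Polynomial.aeval T q) w with hu
    -- h2 : 0 - c • w = (T - 1) u  (in some form)
    simp only [LinearMap.sub_apply, Module.End.one_apply, LinearMap.zero_apply, zero_sub,
      map_one] at h2
    have h4 : -(c • w) = T u - u := h2
    calc c • w = -(-(c • w)) := by rw [neg_neg]
      _ = -(T u - u) := by rw [h4]
      _ = u - T u := by rw [neg_sub]
  intro v
  obtain ⟨k, hk⟩ := hcdvdcard
  refine ⟨Polynomial.aeval T q (k • v), ?_⟩
  have := key (k • v)
  have hρ : T ((Polynomial.aeval T q) (k • v)) = ρ g ((Polynomial.aeval T q) (k • v)) := rfl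
  rw [hρ] at this
  rw [hk, mul_smul, this]
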